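/- arXiv:2302.02256 — 2 statements merged into one kernel-verified Lean document; each statement's English description precedes it below -/
import Mathlib

section
/- Let A be a real d×d Hurwitz matrix (all eigenvalues of A have strictly negative real part), B a real d×m matrix, R = ∫₀^∞ e^{tA} B Bᵀ e^{tAᵀ} dt, α ∈ ℝᵈ, and ω ≠ 0 a real number. Set a = Aᵀα ∈ ℝᵈ and γ = Bᵀα ∈ ℝᵐ. Then (π/ω²)·(⟨a, Ŝ_A(ω) R a⟩ + ⟨a, Ŝ_A(ω) B γ⟩ + ‖γ‖²/(2π)) = π ⟨α, Ŝ_A(ω) R α⟩. -/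
open MeasureTheory
open scoped Matrix

/-- The controllability Gramian `R = ∫₀^∞ e^{tA} B Bᵀ e^{tAᵀ} dt`, defined entrywise. -/
noncomputable def gramian {d m : ℕ} (A : Matrix (Fin d) (Fin d) ℝ)
    (B : Matrix (Fin d) (Fin m) ℝ) : Matrix (Fin d) (Fin d) ℝ :=
  Matrix.of fun i j => ∫ t in Set.Ioi (0 : ℝ),
    (NormedSpace.exp (t • A) * B * Bᵀ * NormedSpace.exp (t • Aᵀ)) i j

/-- The matrix-valued cosine transform `Ŝ_A(ω) = (1/π)∫₀^∞ e^{tA} cos ωt dt`,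
defined entrywise. -/
noncomputable def cosTransform {d : ℕ} (A : Matrix (Fin d) (Fin d) ℝ) (ω : ℝ) :
    Matrix (Fin d) (Fin d) ℝ :=
  Matrix.of fun i j => (1 / Real.pi) * ∫ t in Set.Ioi (0 : ℝ),
    Real.cos (ω * t) * (NormedSpace.exp (t • A)) i j

open NormedSpace

namespace L2aux


attribute [local instance] Matrix.linftyOpNormedAddCommGroup Matrix.linftyOpNormedRing
  Matrix.linftyOpNormedAlgebra Matrix.linftyOpNormedSpace

variable {d : ℕ}

lemma pow_mul_exp_neg_le {t ε : ℝ} (ht : 0 ≤ t) (hε : 0 < ε) (n : ℕ) :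
    t ^ n * Real.exp (-(ε * t)) ≤ n.factorial / ε ^ n := by
  have h1 : (ε * t) ^ n / n.factorial ≤ Real.exp (ε * t) := by
    calc (ε * t) ^ n / n.factorial
        ≤ ∑ i ∈ Finset.range (n + 1), (ε * t) ^ i / i.factorial := by
          refine Finset.single_le_sum (f := fun i => (ε * t) ^ i / i.factorial)
            (fun i _ => by positivity) (Finset.self_mem_range_succ n)
      _ ≤ Real.exp (ε * t) := Real.sum_le_exp_of_nonneg (by positivity) _
  have h2 : ε ^ n * t ^ n ≤ n.factorial * Real.exp (ε * t) := by
    rw [← mul_pow]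
    have := (div_le_iff₀ (by positivity : (0:ℝ) < (n.factorial : ℝ))).mp h1
    linarith [this]
  rw [Real.exp_neg, ← div_eq_mul_inv, div_le_div_iff₀ (Real.exp_pos _) (by positivity)]
  nlinarith [Real.exp_pos (ε * t)]

lemma exists_gap {d : ℕ} (A : Matrix (Fin d) (Fin d) ℂ)
    (hA : ∀ μ ∈ spectrum ℂ A, μ.re < 0) :
    ∃ c : ℝ, 0 < c ∧ ∀ μ ∈ spectrum ℂ A, μ.re < -c := by
  have hfin : (spectrum ℂ A).Finite := Matrix.finite_spectrum A
  set T : Finset ℝ := hfin.toFinset.image (fun μ : ℂ => μ.re) with hT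
  rcases T.eq_empty_or_nonempty with hTe | hTn
  · refine ⟨1, one_pos, fun μ hμ => absurd ?_ (by simp [hTe] : μ.re ∉ T)⟩
    exact Finset.mem_image_of_mem _ (hfin.mem_toFinset.mpr hμ)
  · set M := T.max' hTn with hM
    have hM0 : M < 0 := by
      obtain ⟨μ, hμ, hμre⟩ := Finset.mem_image.mp (T.max'_mem hTn)
      rw [hM, ← hμre]; exact hA μ (hfin.mem_toFinset.mp hμ)
    refine ⟨-M / 2, by linarith, fun μ hμ => ?_⟩
    have : μ.re ≤ M := T.le_max' _ (Finset.mem_image_of_mem _ (hfin.mem_toFinset.mpr hμ))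
    linarith



lemma exp_mulVec_tsum (M : Matrix (Fin d) (Fin d) ℂ) (v : Fin d → ℂ) :
    exp M *ᵥ v = ∑' n : ℕ, ((n.factorial : ℂ)⁻¹) • ((M ^ n) *ᵥ v) := by
  classical
  let L : Matrix (Fin d) (Fin d) ℂ →ₗ[ℂ] (Fin d → ℂ) :=
    { toFun := fun N => N *ᵥ v
      map_add' := fun N₁ N₂ => Matrix.add_mulVec N₁ N₂ v
      map_smul' := fun a N => Matrix.smul_mulVec a N v }
  let Lc : Matrix (Fin d) (Fin d) ℂ →L[ℂ] (Fin d → ℂ) :=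
    { toLinearMap := L, cont := L.continuous_of_finiteDimensional }
  have hsum : Summable (fun n : ℕ => ((n.factorial)⁻¹ : ℂ) • M ^ n) :=
    expSeries_summable' (𝕂 := ℂ) M
  have h1 : exp M = ∑' n : ℕ, ((n.factorial)⁻¹ : ℂ) • M ^ n := by
    exact congrFun (exp_eq_tsum (𝕂 := ℂ)) M
  have h2 := (hsum.hasSum.mapL Lc).tsum_eq
  simp only [Lc, L, ContinuousLinearMap.coe_mk', LinearMap.coe_mk, AddHom.coe_mk,
    Matrix.smul_mulVec] at h2
  rw [h1, ← h2]

lemma piece_bound (A : Matrix (Fin d) (Fin d) ℂ) {μ : ℂ} {c : ℝ} (hμ : μ.re < -c)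
    (v : Fin d → ℂ) (k : ℕ)
    (hv : ((A - μ • (1 : Matrix (Fin d) (Fin d) ℂ)) ^ k) *ᵥ v = 0) :
    ∃ C : ℝ, 0 ≤ C ∧ ∀ t : ℝ, 0 ≤ t →
      ‖exp ((t : ℂ) • A) *ᵥ v‖ ≤ C * Real.exp (-(c * t)) := by
  classical
  set N := A - μ • (1 : Matrix (Fin d) (Fin d) ℂ) with hN
  set ε : ℝ := -c - μ.re with hεdef
  have hε0 : 0 < ε := by simp only [hεdef]; linarith
  refine ⟨∑ n ∈ Finset.range k, (1 / ε ^ n) * ‖(N ^ n) *ᵥ v‖, by positivity, fun t ht => ?_⟩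
  have hsplit : (t : ℂ) • A = (t * μ) • (1 : Matrix (Fin d) (Fin d) ℂ) + (t : ℂ) • N := by
    rw [hN, smul_sub, smul_smul]
    abel
  have hcomm : Commute ((t * μ) • (1 : Matrix (Fin d) (Fin d) ℂ)) ((t : ℂ) • N) :=
    ((Commute.one_left _).smul_left _).smul_right _
  have hone : exp ((t * μ) • (1 : Matrix (Fin d) (Fin d) ℂ))
      = Complex.exp (t * μ) • (1 : Matrix (Fin d) (Fin d) ℂ) := by
    have := algebraMap_exp_comm (𝔸 := Matrix (Fin d) (Fin d) ℂ) ((t : ℂ) * μ)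
    simp only [Algebra.algebraMap_eq_smul_one] at this
    rw [Complex.exp_eq_exp_ℂ]
    exact this.symm
  have hexp : exp ((t : ℂ) • A) *ᵥ v
      = Complex.exp (t * μ) • (exp ((t : ℂ) • N) *ᵥ v) := by
    rw [hsplit, show exp (((t : ℂ) * μ) • (1 : Matrix (Fin d) (Fin d) ℂ) + (t : ℂ) • N)
        = exp (((t : ℂ) * μ) • (1 : Matrix (Fin d) (Fin d) ℂ)) * exp ((t : ℂ) • N) from
        exp_add_of_commute hcomm, hone, smul_mul_assoc, one_mul,
      Matrix.smul_mulVec]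
  have hNpow : ∀ n : ℕ, k ≤ n → (N ^ n) *ᵥ v = 0 := by
    intro n hn
    have : N ^ n = N ^ (n - k) * N ^ k := by rw [← pow_add]; congr 1; omega
    rw [this, ← Matrix.mulVec_mulVec, hv, Matrix.mulVec_zero]
  have hexpN : exp ((t : ℂ) • N) *ᵥ v
      = ∑ n ∈ Finset.range k, ((n.factorial : ℂ)⁻¹ * (t : ℂ) ^ n) • ((N ^ n) *ᵥ v) := by
    rw [exp_mulVec_tsum]
    rw [tsum_eq_sum (s := Finset.range k) ?h]
    · refine Finset.sum_congr rfl fun n _ => ?_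
      rw [smul_pow, Matrix.smul_mulVec, smul_smul]
    · intro n hn
      rw [smul_pow, Matrix.smul_mulVec, smul_smul,
        hNpow n (by simpa using hn), smul_zero]
  rw [hexp, hexpN, norm_smul]
  have habs : ‖Complex.exp (↑t * μ)‖ = Real.exp (t * μ.re) := by
    rw [Complex.norm_exp]
    congr 1
    simp [Complex.mul_re]
  rw [habs]
  calc Real.exp (t * μ.re) * ‖∑ n ∈ Finset.range k, ((n.factorial : ℂ)⁻¹ * (t : ℂ) ^ n) • ((N ^ n) *ᵥ v)‖
      ≤ Real.exp (t * μ.re) * ∑ n ∈ Finset.range k, (t ^ n / n.factorial) * ‖(N ^ n) *ᵥ v‖ := by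
        refine mul_le_mul_of_nonneg_left ?_ (Real.exp_pos _).le
        refine (norm_sum_le _ _).trans (Finset.sum_le_sum fun n _ => ?_)
        rw [norm_smul]
        refine mul_le_mul_of_nonneg_right (le_of_eq ?_) (norm_nonneg _)
        rw [norm_mul, norm_inv, norm_pow]
        simp [Complex.norm_natCast, Complex.norm_real, abs_of_nonneg ht, div_eq_inv_mul]
    _ ≤ ∑ n ∈ Finset.range k, (1 / ε ^ n) * ‖(N ^ n) *ᵥ v‖ * Real.exp (-(c * t)) := by
        rw [Finset.mul_sum]
        refine Finset.sum_le_sum fun n _ => ?_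
        have hre : t * μ.re = -(c * t) + -(ε * t) := by rw [hεdef]; ring
        rw [hre, Real.exp_add]
        have hb := pow_mul_exp_neg_le ht hε0 n
        have hfac : (0:ℝ) < (n.factorial : ℝ) := by positivity
        have h1 : t ^ n * Real.exp (-(ε * t)) / (n.factorial : ℝ) ≤ 1 / ε ^ n := by
          rw [div_le_div_iff₀ hfac (by positivity : (0:ℝ) < ε ^ n)]
          calc t ^ n * Real.exp (-(ε * t)) * ε ^ n
              ≤ ((n.factorial : ℝ) / ε ^ n) * ε ^ n := by
                exact mul_le_mul_of_nonneg_right hb (by positivity)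
            _ = 1 * (n.factorial : ℝ) := by field_simp
        calc Real.exp (-(c * t)) * Real.exp (-(ε * t)) * (t ^ n / (n.factorial:ℝ) * ‖(N ^ n) *ᵥ v‖)
            = (t ^ n * Real.exp (-(ε * t)) / (n.factorial:ℝ)) * ‖(N ^ n) *ᵥ v‖ * Real.exp (-(c * t)) := by
              ring
          _ ≤ (1 / ε ^ n) * ‖(N ^ n) *ᵥ v‖ * Real.exp (-(c * t)) := by
              gcongr
    _ = (∑ n ∈ Finset.range k, (1 / ε ^ n) * ‖(N ^ n) *ᵥ v‖) * Real.exp (-(c * t)) := by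
        rw [Finset.sum_mul]

lemma entry_decay_complex (A : Matrix (Fin d) (Fin d) ℂ)
    (hA : ∀ μ ∈ spectrum ℂ A, μ.re < 0) :
    ∃ c C : ℝ, 0 < c ∧ 0 ≤ C ∧ ∀ t : ℝ, 0 ≤ t → ∀ i j : Fin d,
      ‖exp ((t : ℂ) • A) i j‖ ≤ C * Real.exp (-(c * t)) := by
  classical
  obtain ⟨c, hc, hgap⟩ := exists_gap A hA
  have hcol : ∀ j : Fin d, ∃ C : ℝ, 0 ≤ C ∧ ∀ t : ℝ, 0 ≤ t →
      ‖exp ((t : ℂ) • A) *ᵥ Pi.single j 1‖ ≤ C * Real.exp (-(c * t)) := by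
    intro j
    set f : Module.End ℂ (Fin d → ℂ) := Matrix.toLinAlgEquiv' A with hf
    have hmem : Pi.single j (1 : ℂ) ∈ ⨆ μ : ℂ, f.maxGenEigenspace μ := by
      rw [Module.End.iSup_maxGenEigenspace_eq_top]; trivial
    rw [Submodule.mem_iSup_iff_exists_finsupp] at hmem
    obtain ⟨g, hgmem, hgsum⟩ := hmem
    have hpb : ∀ μ ∈ g.support, ∃ C : ℝ, 0 ≤ C ∧ ∀ t : ℝ, 0 ≤ t →
        ‖exp ((t : ℂ) • A) *ᵥ g μ‖ ≤ C * Real.exp (-(c * t)) := by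
      intro μ hμs
      have hne : g μ ≠ 0 := Finsupp.mem_support_iff.mp hμs
      obtain ⟨k, hk⟩ := (Module.End.mem_maxGenEigenspace f μ (g μ)).mp (hgmem μ)
      have hspec : μ ∈ spectrum ℂ A := by
        have hev : f.HasEigenvalue μ := by
          refine Module.End.hasEigenvalue_of_hasGenEigenvalue (k := k) ?_
          rw [Module.End.hasGenEigenvalue_iff]
          intro hbot
          refine hne ?_
          have : g μ ∈ f.genEigenspace μ (k : ℕ∞) :=
            (Module.End.mem_genEigenspace_nat).mpr hk
          rw [hbot] at this
          simpa using this
        rw [← AlgEquiv.spectrum_eq (Matrix.toLinAlgEquiv' (n := Fin d) (R := ℂ)) A]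
        exact Module.End.hasEigenvalue_iff_mem_spectrum.mp hev
      have hkm : ((A - μ • (1 : Matrix (Fin d) (Fin d) ℂ)) ^ k) *ᵥ g μ = 0 := by
        have he : (Matrix.toLinAlgEquiv' (n := Fin d) (R := ℂ))
            ((A - μ • (1 : Matrix (Fin d) (Fin d) ℂ)) ^ k) = (f - μ • 1) ^ k := by
          rw [map_pow, map_sub, _root_.map_smul, map_one, hf]
        calc ((A - μ • (1 : Matrix (Fin d) (Fin d) ℂ)) ^ k) *ᵥ g μ
            = (Matrix.toLinAlgEquiv' ((A - μ • (1 : Matrix (Fin d) (Fin d) ℂ)) ^ k)) (g μ) :=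
              (Matrix.toLinAlgEquiv'_apply _ _).symm
          _ = ((f - μ • 1) ^ k) (g μ) := by rw [he]
          _ = 0 := hk
      exact piece_bound A (hgap μ hspec) (g μ) k hkm
    choose! Cg hCg0 hCg using hpb
    refine ⟨∑ μ ∈ g.support, Cg μ, Finset.sum_nonneg fun μ hμ => hCg0 μ hμ, fun t ht => ?_⟩
    have hsingle : Pi.single j (1 : ℂ) = ∑ μ ∈ g.support, g μ := hgsum.symm
    have hmv : exp ((t : ℂ) • A) *ᵥ Pi.single j 1
        = ∑ μ ∈ g.support, exp ((t : ℂ) • A) *ᵥ g μ := by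
      rw [hsingle, ← Matrix.mulVecLin_apply, map_sum]
      simp [Matrix.mulVecLin_apply]
    rw [hmv]
    calc ‖∑ μ ∈ g.support, exp ((t : ℂ) • A) *ᵥ g μ‖
        ≤ ∑ μ ∈ g.support, ‖exp ((t : ℂ) • A) *ᵥ g μ‖ := norm_sum_le _ _
      _ ≤ ∑ μ ∈ g.support, Cg μ * Real.exp (-(c * t)) :=
          Finset.sum_le_sum fun μ hμ => hCg μ hμ t ht
      _ = (∑ μ ∈ g.support, Cg μ) * Real.exp (-(c * t)) := by rw [Finset.sum_mul]
  choose Ccol hCcol0 hCcol using hcol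
  refine ⟨c, ∑ j, Ccol j, hc, Finset.sum_nonneg fun j _ => hCcol0 j, fun t ht i j => ?_⟩
  have h1 : ‖exp ((t : ℂ) • A) i j‖ ≤ ‖exp ((t : ℂ) • A) *ᵥ Pi.single j 1‖ := by
    have : (exp ((t : ℂ) • A) *ᵥ Pi.single j 1) i = exp ((t : ℂ) • A) i j := by
      simp [Matrix.mulVec_single]
    rw [← this]
    exact norm_le_pi_norm _ i
  refine h1.trans ((hCcol j t ht).trans ?_)
  refine mul_le_mul_of_nonneg_right ?_ (Real.exp_pos _).le
  exact Finset.single_le_sum (fun j _ => hCcol0 j) (Finset.mem_univ j)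

lemma exp_real_map (A : Matrix (Fin d) (Fin d) ℝ) (t : ℝ) :
    (exp (t • A)).map Complex.ofReal = exp ((t : ℂ) • A.map Complex.ofReal) := by
  have hcont : Continuous fun M : Matrix (Fin d) (Fin d) ℝ =>
      (Complex.ofRealHom.mapMatrix (m := Fin d)) M :=
    Continuous.matrix_map continuous_id Complex.continuous_ofReal
  have h1 : (Complex.ofRealHom.mapMatrix (m := Fin d)) (exp (t • A))
      = exp ((Complex.ofRealHom.mapMatrix (m := Fin d)) (t • A)) :=
    map_exp _ hcont _
  have h2 : (Complex.ofRealHom.mapMatrix (m := Fin d)) (t • A)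
      = (t : ℂ) • A.map Complex.ofReal := by
    ext i j
    simp [RingHom.mapMatrix_apply, Matrix.map_apply]
  have h3 : (exp : Matrix (Fin d) (Fin d) ℂ → _) = exp := rfl
  calc (exp (t • A)).map Complex.ofReal
      = (Complex.ofRealHom.mapMatrix (m := Fin d)) (exp (t • A)) := rfl
    _ = exp ((t : ℂ) • A.map Complex.ofReal) := by rw [h1, h2]
    _ = exp ((t : ℂ) • A.map Complex.ofReal) := by rw [h3]

lemma entry_decay (A : Matrix (Fin d) (Fin d) ℝ)
    (hA : ∀ μ ∈ spectrum ℂ (A.map Complex.ofReal), μ.re < 0) :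
    ∃ c C : ℝ, 0 < c ∧ 0 ≤ C ∧ ∀ t : ℝ, 0 ≤ t → ∀ i j : Fin d,
      |exp (t • A) i j| ≤ C * Real.exp (-(c * t)) := by
  obtain ⟨c, C, hc, hC, hb⟩ := entry_decay_complex (A.map Complex.ofReal) hA
  refine ⟨c, C, hc, hC, fun t ht i j => ?_⟩
  have h1 : ((exp (t • A) i j : ℝ) : ℂ) = exp ((t : ℂ) • A.map Complex.ofReal) i j := by
    rw [← exp_real_map]
    rfl
  have h2 : |exp (t • A) i j| = ‖exp ((t : ℂ) • A.map Complex.ofReal) i j‖ := by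
    rw [← h1, Complex.norm_real, Real.norm_eq_abs]
  rw [h2]
  exact hb t ht i j

lemma hasDerivAt_entry {dd mm : ℕ} {f : ℝ → Matrix (Fin dd) (Fin mm) ℝ}
    {f' : Matrix (Fin dd) (Fin mm) ℝ} {t : ℝ} (h : HasDerivAt f f' t) (i : Fin dd)
    (j : Fin mm) : HasDerivAt (fun s => f s i j) (f' i j) t := by
  let L : Matrix (Fin dd) (Fin mm) ℝ →ₗ[ℝ] ℝ :=
    (LinearMap.proj j).comp (LinearMap.proj (R := ℝ) (φ := fun _ : Fin dd => Fin mm → ℝ) i)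
  let Lc : Matrix (Fin dd) (Fin mm) ℝ →L[ℝ] ℝ :=
    { toLinearMap := L, cont := L.continuous_of_finiteDimensional }
  exact Lc.hasFDerivAt.comp_hasDerivAt t h

lemma hasDerivAt_exp_entry (A : Matrix (Fin d) (Fin d) ℝ) (t : ℝ) (i j : Fin d) :
    HasDerivAt (fun s : ℝ => exp (s • A) i j) ((A * exp (t • A)) i j) t :=
  hasDerivAt_entry (hasDerivAt_exp_smul_const' A t) i j

lemma continuous_exp_entry (A : Matrix (Fin d) (Fin d) ℝ) (i j : Fin d) :
    Continuous fun t : ℝ => exp (t • A) i j :=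
  continuous_iff_continuousAt.mpr fun t => (hasDerivAt_exp_entry A t i j).continuousAt

lemma hasDerivAt_gram_entry {m : ℕ} (A : Matrix (Fin d) (Fin d) ℝ)
    (B : Matrix (Fin d) (Fin m) ℝ) (t : ℝ) (i j : Fin d) :
    HasDerivAt (fun s : ℝ => (exp (s • A) * B * Bᵀ * exp (s • Aᵀ)) i j)
      ((A * (exp (t • A) * B * Bᵀ * exp (t • Aᵀ))
        + (exp (t • A) * B * Bᵀ * exp (t • Aᵀ)) * Aᵀ) i j) t := by
  have h1 := (hasDerivAt_exp_smul_const' A t).mul_const (B * Bᵀ)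
  have h2 := hasDerivAt_exp_smul_const (Aᵀ) t
  have h3 : HasDerivAt (fun y : ℝ => exp (y • A) * (B * Bᵀ) * exp (y • Aᵀ))
      (A * exp (t • A) * (B * Bᵀ) * exp (t • Aᵀ) + exp (t • A) * (B * Bᵀ) * (exp (t • Aᵀ) * Aᵀ)) t :=
    h1.mul h2
  have hfun : (fun y : ℝ => exp (y • A) * (B * Bᵀ) * exp (y • Aᵀ))
      = fun y : ℝ => exp (y • A) * B * Bᵀ * exp (y • Aᵀ) := by
    funext y
    simp only [Matrix.mul_assoc]
  have hder : A * exp (t • A) * (B * Bᵀ) * exp (t • Aᵀ)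
      + exp (t • A) * (B * Bᵀ) * (exp (t • Aᵀ) * Aᵀ)
      = A * (exp (t • A) * B * Bᵀ * exp (t • Aᵀ))
        + (exp (t • A) * B * Bᵀ * exp (t • Aᵀ)) * Aᵀ := by
    simp only [Matrix.mul_assoc]
  rw [hfun, hder] at h3
  exact hasDerivAt_entry h3 i j

lemma exp_commute (A : Matrix (Fin d) (Fin d) ℝ) (t : ℝ) :
    A * exp (t • A) = exp (t • A) * A :=
  (((Commute.refl A).smul_right t).exp_right).eq

lemma expT (A : Matrix (Fin d) (Fin d) ℝ) (t : ℝ) :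
    exp (t • Aᵀ) = (exp (t • A))ᵀ := by
  rw [← Matrix.transpose_smul, Matrix.exp_transpose]

open MeasureTheory Filter in
lemma integrableOn_of_bound {f : ℝ → ℝ} (hf : Continuous f) {c K : ℝ} (hc : 0 < c)
    (h : ∀ t, 0 ≤ t → |f t| ≤ K * Real.exp (-(c * t))) :
    IntegrableOn f (Set.Ioi (0:ℝ)) := by
  have hg : IntegrableOn (fun t => K * Real.exp (-(c * t))) (Set.Ioi (0:ℝ)) := by
    simpa [neg_mul, IntegrableOn] using (exp_neg_integrableOn_Ioi 0 hc).const_mul K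
  refine hg.integrable.mono' hf.aestronglyMeasurable ?_
  refine (ae_restrict_iff' measurableSet_Ioi).mpr (ae_of_all _ fun t ht => ?_)
  rw [Real.norm_eq_abs]
  exact h t (le_of_lt ht)

open Filter in
lemma tendsto_zero_of_bound {f : ℝ → ℝ} {c K : ℝ} (hc : 0 < c)
    (h : ∀ t, 0 ≤ t → |f t| ≤ K * Real.exp (-(c * t))) :
    Tendsto f atTop (nhds 0) := by
  have h1 : Tendsto (fun t : ℝ => -(c * t)) atTop atBot :=
    tendsto_neg_atTop_atBot.comp (Tendsto.const_mul_atTop hc tendsto_id)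
  have hg : Tendsto (fun t => K * Real.exp (-(c * t))) atTop (nhds 0) := by
    simpa using (Real.tendsto_exp_atBot.comp h1).const_mul K
  refine squeeze_zero_norm' ?_ hg
  filter_upwards [eventually_ge_atTop (0:ℝ)] with t ht using by
    rw [Real.norm_eq_abs]; exact h t ht

lemma entry_triple_bound {p q r s : ℕ} (M1 : Matrix (Fin p) (Fin q) ℝ)
    (C0 : Matrix (Fin q) (Fin r) ℝ) (M2 : Matrix (Fin r) (Fin s) ℝ) {b1 b2 : ℝ}
    (hb1 : 0 ≤ b1) (hb2 : 0 ≤ b2) (h1 : ∀ i j, |M1 i j| ≤ b1)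
    (h2 : ∀ i j, |M2 i j| ≤ b2) (i : Fin p) (j : Fin s) :
    |(M1 * C0 * M2) i j| ≤ (∑ k, ∑ l, |C0 k l|) * b1 * b2 := by
  calc |(M1 * C0 * M2) i j| = |∑ l, (∑ k, M1 i k * C0 k l) * M2 l j| := by
        simp [Matrix.mul_apply]
    _ ≤ ∑ l, |(∑ k, M1 i k * C0 k l) * M2 l j| := Finset.abs_sum_le_sum_abs _ _
    _ = ∑ l, |∑ k, M1 i k * C0 k l| * |M2 l j| := by simp [abs_mul]
    _ ≤ ∑ l, (∑ k, b1 * |C0 k l|) * b2 := by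
        refine Finset.sum_le_sum fun l _ => ?_
        refine mul_le_mul ?_ (h2 l j) (abs_nonneg _) (Finset.sum_nonneg fun k _ => by positivity)
        refine (Finset.abs_sum_le_sum_abs _ _).trans (Finset.sum_le_sum fun k _ => ?_)
        rw [abs_mul]
        exact mul_le_mul_of_nonneg_right (h1 i k) (abs_nonneg _)
    _ = (∑ k, ∑ l, |C0 k l|) * b1 * b2 := by
        have hl : ∀ l : Fin r, (∑ k, b1 * |C0 k l|) * b2 = b1 * b2 * ∑ k, |C0 k l| := fun l => by
          rw [← Finset.mul_sum]; ring
        rw [Finset.sum_congr rfl fun l _ => hl l, ← Finset.mul_sum, Finset.sum_comm]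
        ring

noncomputable def sinT {d : ℕ} (A : Matrix (Fin d) (Fin d) ℝ) (ω : ℝ) :
    Matrix (Fin d) (Fin d) ℝ :=
  Matrix.of fun i j => (1 / Real.pi) * ∫ t in Set.Ioi (0 : ℝ),
    Real.sin (ω * t) * (NormedSpace.exp (t • A)) i j

open MeasureTheory in
lemma key_identities {d m : ℕ} (A : Matrix (Fin d) (Fin d) ℝ) (B : Matrix (Fin d) (Fin m) ℝ)
    (hA : ∀ μ ∈ spectrum ℂ (A.map Complex.ofReal), μ.re < 0) (ω : ℝ) :
    (A * gramian A B + gramian A B * Aᵀ = -(B * Bᵀ))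
    ∧ (A * cosTransform A ω = (-(1 / Real.pi)) • 1 + ω • sinT A ω)
    ∧ (A * sinT A ω = (-ω) • cosTransform A ω)
    ∧ (cosTransform A ω * A = A * cosTransform A ω) := by
  classical
  obtain ⟨c, C, hc, hC, hb⟩ := entry_decay A hA
  set E : ℝ → Matrix (Fin d) (Fin d) ℝ := fun t => exp (t • A) with hEdef
  set G : ℝ → Matrix (Fin d) (Fin d) ℝ :=
    fun t => exp (t • A) * B * Bᵀ * exp (t • Aᵀ) with hGdef
  set KA : ℝ := ∑ k, ∑ l, |A k l| with hKA
  set KB : ℝ := ∑ k, ∑ l, |(B * Bᵀ) k l| with hKB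
  have hKA0 : 0 ≤ KA := Finset.sum_nonneg fun k _ => Finset.sum_nonneg fun l _ => abs_nonneg _
  have hKB0 : 0 ≤ KB := Finset.sum_nonneg fun k _ => Finset.sum_nonneg fun l _ => abs_nonneg _
  have hone_entry : ∀ i j : Fin d, |(1 : Matrix (Fin d) (Fin d) ℝ) i j| ≤ 1 := by
    intro i j
    rw [Matrix.one_apply]
    split_ifs <;> simp
  have hexp_pos : ∀ t : ℝ, 0 < Real.exp (-(c * t)) := fun t => Real.exp_pos _
  have hexp_le_one : ∀ t : ℝ, 0 ≤ t → Real.exp (-(c * t)) ≤ 1 := fun t ht =>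
    Real.exp_le_one_iff.mpr (by nlinarith)
  -- entry bounds
  have hbE : ∀ t, 0 ≤ t → ∀ i j, |E t i j| ≤ C * Real.exp (-(c * t)) := fun t ht => hb t ht
  have hbET : ∀ t, 0 ≤ t → ∀ i j, |(E t)ᵀ i j| ≤ C * Real.exp (-(c * t)) := fun t ht i j =>
    hb t ht j i
  have hbAE : ∀ t, 0 ≤ t → ∀ i j, |(A * E t) i j| ≤ KA * C * Real.exp (-(c * t)) := by
    intro t ht i j
    have h := entry_triple_bound 1 A (E t) zero_le_one
      (by positivity : (0:ℝ) ≤ C * Real.exp (-(c * t))) hone_entry (hbE t ht) i j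
    rw [Matrix.one_mul] at h
    calc |(A * E t) i j| ≤ KA * 1 * (C * Real.exp (-(c * t))) := h
      _ = KA * C * Real.exp (-(c * t)) := by ring
  have hGform : ∀ t : ℝ, G t = E t * (B * Bᵀ) * (E t)ᵀ := by
    intro t
    rw [hGdef, hEdef]
    rw [← expT]
    simp only [Matrix.mul_assoc]
  have hbG : ∀ t, 0 ≤ t → ∀ i j, |G t i j| ≤ KB * C * C * Real.exp (-(c * t)) := by
    intro t ht i j
    rw [hGform t]
    have h := entry_triple_bound (E t) (B * Bᵀ) ((E t)ᵀ)
      (by positivity : (0:ℝ) ≤ C * Real.exp (-(c * t)))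
      (by positivity : (0:ℝ) ≤ C * Real.exp (-(c * t))) (hbE t ht) (hbET t ht) i j
    refine h.trans ?_
    have h2 : Real.exp (-(c * t)) * Real.exp (-(c * t)) ≤ Real.exp (-(c * t)) := by
      nlinarith [hexp_le_one t ht, (hexp_pos t).le]
    calc KB * (C * Real.exp (-(c * t))) * (C * Real.exp (-(c * t)))
        = KB * C * C * (Real.exp (-(c * t)) * Real.exp (-(c * t))) := by ring
      _ ≤ KB * C * C * Real.exp (-(c * t)) := by
          refine mul_le_mul_of_nonneg_left h2 (by positivity)
  have hbAG : ∀ t, 0 ≤ t → ∀ i j, |(A * G t) i j| ≤ KA * (KB * C * C) * Real.exp (-(c * t)) := by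
    intro t ht i j
    have h := entry_triple_bound 1 A (G t) zero_le_one
      (by positivity : (0:ℝ) ≤ KB * C * C * Real.exp (-(c * t))) hone_entry (hbG t ht) i j
    rw [Matrix.one_mul] at h
    refine h.trans (le_of_eq ?_)
    ring
  have hbGA : ∀ t, 0 ≤ t → ∀ i j,
      |(G t * Aᵀ) i j| ≤ (∑ k, ∑ l, |Aᵀ k l|) * (KB * C * C) * Real.exp (-(c * t)) := by
    intro t ht i j
    have h := entry_triple_bound (G t) Aᵀ 1
      (by positivity : (0:ℝ) ≤ KB * C * C * Real.exp (-(c * t))) zero_le_one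
      (hbG t ht) hone_entry i j
    rw [Matrix.mul_one] at h
    refine h.trans (le_of_eq ?_)
    ring
  -- continuity
  have hcE : ∀ i j, Continuous fun t => E t i j := fun i j => continuous_exp_entry A i j
  have hcG : ∀ i j, Continuous fun t => G t i j := fun i j =>
    continuous_iff_continuousAt.mpr fun t => (hasDerivAt_gram_entry A B t i j).continuousAt
  have hcAE : ∀ i j, Continuous fun t => (A * E t) i j := by
    intro i j
    simp only [Matrix.mul_apply]
    exact continuous_finset_sum _ fun k _ => (continuous_const.mul (hcE k j))
  have hcAG : ∀ i j, Continuous fun t => (A * G t) i j := by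
    intro i j
    simp only [Matrix.mul_apply]
    exact continuous_finset_sum _ fun k _ => (continuous_const.mul (hcG k j))
  have hcGA : ∀ i j, Continuous fun t => (G t * Aᵀ) i j := by
    intro i j
    simp only [Matrix.mul_apply]
    exact continuous_finset_sum _ fun k _ => ((hcG i k).mul continuous_const)
  -- integrability
  have hIE_cos : ∀ i j, IntegrableOn (fun t => Real.cos (ω * t) * E t i j) (Set.Ioi 0) := by
    intro i j
    refine integrableOn_of_bound ((Real.continuous_cos.comp (continuous_const.mul continuous_id)).mul (hcE i j)) (K := C) hc ?_
    intro t ht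
    rw [abs_mul]
    calc |Real.cos (ω * t)| * |E t i j| ≤ 1 * (C * Real.exp (-(c * t))) :=
      mul_le_mul (Real.abs_cos_le_one _) (hbE t ht i j) (abs_nonneg _) zero_le_one
    _ = C * Real.exp (-(c * t)) := one_mul _
  have hIE_sin : ∀ i j, IntegrableOn (fun t => Real.sin (ω * t) * E t i j) (Set.Ioi 0) := by
    intro i j
    refine integrableOn_of_bound ((Real.continuous_sin.comp (continuous_const.mul continuous_id)).mul (hcE i j)) (K := C) hc ?_
    intro t ht
    rw [abs_mul]
    calc |Real.sin (ω * t)| * |E t i j| ≤ 1 * (C * Real.exp (-(c * t))) :=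
      mul_le_mul (Real.abs_sin_le_one _) (hbE t ht i j) (abs_nonneg _) zero_le_one
    _ = C * Real.exp (-(c * t)) := one_mul _
  have hIAE_cos : ∀ i j, IntegrableOn (fun t => Real.cos (ω * t) * (A * E t) i j) (Set.Ioi 0) := by
    intro i j
    refine integrableOn_of_bound ((Real.continuous_cos.comp (continuous_const.mul continuous_id)).mul (hcAE i j)) (K := KA * C) hc ?_
    intro t ht
    rw [abs_mul]
    calc |Real.cos (ω * t)| * |(A * E t) i j| ≤ 1 * (KA * C * Real.exp (-(c * t))) :=
      mul_le_mul (Real.abs_cos_le_one _) (hbAE t ht i j) (abs_nonneg _) zero_le_one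
    _ = KA * C * Real.exp (-(c * t)) := one_mul _
  have hIAE_sin : ∀ i j, IntegrableOn (fun t => Real.sin (ω * t) * (A * E t) i j) (Set.Ioi 0) := by
    intro i j
    refine integrableOn_of_bound ((Real.continuous_sin.comp (continuous_const.mul continuous_id)).mul (hcAE i j)) (K := KA * C) hc ?_
    intro t ht
    rw [abs_mul]
    calc |Real.sin (ω * t)| * |(A * E t) i j| ≤ 1 * (KA * C * Real.exp (-(c * t))) :=
      mul_le_mul (Real.abs_sin_le_one _) (hbAE t ht i j) (abs_nonneg _) zero_le_one
    _ = KA * C * Real.exp (-(c * t)) := one_mul _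
  have hIG : ∀ i j, IntegrableOn (fun t => G t i j) (Set.Ioi 0) := fun i j =>
    integrableOn_of_bound (hcG i j) hc (fun t ht => hbG t ht i j)
  have hIAG : ∀ i j, IntegrableOn (fun t => (A * G t) i j) (Set.Ioi 0) := fun i j =>
    integrableOn_of_bound (hcAG i j) hc (fun t ht => hbAG t ht i j)
  have hIGA : ∀ i j, IntegrableOn (fun t => (G t * Aᵀ) i j) (Set.Ioi 0) := fun i j =>
    integrableOn_of_bound (hcGA i j) hc (fun t ht => hbGA t ht i j)
  -- FTC results
  have ftcG : ∀ i j, (∫ t in Set.Ioi (0:ℝ), ((A * G t) i j + (G t * Aᵀ) i j))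
      = -((B * Bᵀ) i j) := by
    intro i j
    have hder : ∀ x ∈ Set.Ici (0:ℝ), HasDerivAt (fun s => G s i j)
        ((fun s => (A * G s + G s * Aᵀ) i j) x) x := fun x _ =>
      hasDerivAt_gram_entry A B x i j
    have hint : IntegrableOn (fun s => (A * G s + G s * Aᵀ) i j) (Set.Ioi (0:ℝ)) := by
      have := (hIAG i j).add (hIGA i j)
      refine IntegrableOn.congr_fun this ?_ measurableSet_Ioi
      intro t _
      simp [Matrix.add_apply]
    have htd : Filter.Tendsto (fun s => G s i j) Filter.atTop (nhds 0) :=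
      tendsto_zero_of_bound hc (fun t ht => hbG t ht i j)
    have h := integral_Ioi_of_hasDerivAt_of_tendsto' hder hint htd
    have hG0 : G 0 i j = (B * Bᵀ) i j := by
      rw [hGdef]
      simp
    rw [hG0] at h
    calc (∫ t in Set.Ioi (0:ℝ), ((A * G t) i j + (G t * Aᵀ) i j))
        = ∫ t in Set.Ioi (0:ℝ), (A * G t + G t * Aᵀ) i j := by
          refine setIntegral_congr_fun measurableSet_Ioi fun t _ => ?_
          simp [Matrix.add_apply]
      _ = 0 - (B * Bᵀ) i j := h
      _ = -((B * Bᵀ) i j) := by ring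
  have hcosD : ∀ (x : ℝ), HasDerivAt (fun s : ℝ => Real.cos (ω * s)) (-(Real.sin (ω * x)) * ω) x := by
    intro x
    have h1 : HasDerivAt (fun s : ℝ => ω * s) ω x := by
      simpa using (hasDerivAt_id x).const_mul ω
    simpa [Function.comp_def] using (Real.hasDerivAt_cos (ω * x)).comp x h1
  have hsinD : ∀ (x : ℝ), HasDerivAt (fun s : ℝ => Real.sin (ω * s)) (Real.cos (ω * x) * ω) x := by
    intro x
    have h1 : HasDerivAt (fun s : ℝ => ω * s) ω x := by
      simpa using (hasDerivAt_id x).const_mul ω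
    simpa [Function.comp_def] using (Real.hasDerivAt_sin (ω * x)).comp x h1
  have ftcC : ∀ i j, (∫ t in Set.Ioi (0:ℝ),
        (-(Real.sin (ω * t)) * ω * E t i j + Real.cos (ω * t) * (A * E t) i j))
      = -((1 : Matrix (Fin d) (Fin d) ℝ) i j) := by
    intro i j
    have hder : ∀ x ∈ Set.Ici (0:ℝ), HasDerivAt (fun s => Real.cos (ω * s) * E s i j)
        (-(Real.sin (ω * x)) * ω * E x i j + Real.cos (ω * x) * (A * E x) i j) x := fun x _ =>
      (hcosD x).mul (hasDerivAt_exp_entry A x i j)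
    have hint : IntegrableOn (fun t =>
        -(Real.sin (ω * t)) * ω * E t i j + Real.cos (ω * t) * (A * E t) i j) (Set.Ioi (0:ℝ)) := by
      refine Integrable.add ?_ (hIAE_cos i j)
      have := (hIE_sin i j).const_mul (-ω)
      refine IntegrableOn.congr_fun this ?_ measurableSet_Ioi
      intro t _
      ring
    have htd : Filter.Tendsto (fun s => Real.cos (ω * s) * E s i j) Filter.atTop (nhds 0) := by
      refine tendsto_zero_of_bound (K := C) hc ?_
      intro t ht
      rw [abs_mul]
      calc |Real.cos (ω * t)| * |E t i j| ≤ 1 * (C * Real.exp (-(c * t))) :=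
        mul_le_mul (Real.abs_cos_le_one _) (hbE t ht i j) (abs_nonneg _) zero_le_one
      _ = C * Real.exp (-(c * t)) := one_mul _
    have h := integral_Ioi_of_hasDerivAt_of_tendsto' hder hint htd
    have hE0 : Real.cos (ω * 0) * E 0 i j = (1 : Matrix (Fin d) (Fin d) ℝ) i j := by
      rw [hEdef]
      simp
    rw [h, hE0]
    ring
  have ftcS : ∀ i j, (∫ t in Set.Ioi (0:ℝ),
        (Real.cos (ω * t) * ω * E t i j + Real.sin (ω * t) * (A * E t) i j)) = 0 := by
    intro i j
    have hder : ∀ x ∈ Set.Ici (0:ℝ), HasDerivAt (fun s => Real.sin (ω * s) * E s i j)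
        (Real.cos (ω * x) * ω * E x i j + Real.sin (ω * x) * (A * E x) i j) x := fun x _ =>
      (hsinD x).mul (hasDerivAt_exp_entry A x i j)
    have hint : IntegrableOn (fun t =>
        Real.cos (ω * t) * ω * E t i j + Real.sin (ω * t) * (A * E t) i j) (Set.Ioi (0:ℝ)) := by
      refine Integrable.add ?_ (hIAE_sin i j)
      have := (hIE_cos i j).const_mul ω
      refine IntegrableOn.congr_fun this ?_ measurableSet_Ioi
      intro t _
      ring
    have htd : Filter.Tendsto (fun s => Real.sin (ω * s) * E s i j) Filter.atTop (nhds 0) := by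
      refine tendsto_zero_of_bound (K := C) hc ?_
      intro t ht
      rw [abs_mul]
      calc |Real.sin (ω * t)| * |E t i j| ≤ 1 * (C * Real.exp (-(c * t))) :=
        mul_le_mul (Real.abs_sin_le_one _) (hbE t ht i j) (abs_nonneg _) zero_le_one
      _ = C * Real.exp (-(c * t)) := one_mul _
    have h := integral_Ioi_of_hasDerivAt_of_tendsto' hder hint htd
    rw [h]
    simp
  -- sum-pulling: (A * ∫-matrix) entries
  have hpullA_cos : ∀ i j, (A * cosTransform A ω) i j
      = (1 / Real.pi) * ∫ t in Set.Ioi (0:ℝ), Real.cos (ω * t) * (A * E t) i j := by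
    intro i j
    rw [Matrix.mul_apply]
    have h1 : ∀ k, A i k * cosTransform A ω k j
        = (1 / Real.pi) * ∫ t in Set.Ioi (0:ℝ), A i k * (Real.cos (ω * t) * E t k j) := by
      intro k
      rw [cosTransform, Matrix.of_apply, integral_const_mul]
      ring
    rw [Finset.sum_congr rfl fun k _ => h1 k, ← Finset.mul_sum,
      ← integral_finset_sum _ (fun k _ => ((hIE_cos k j).const_mul _))]
    congr 1
    refine setIntegral_congr_fun measurableSet_Ioi fun t _ => ?_
    rw [Matrix.mul_apply, Finset.mul_sum]
    exact Finset.sum_congr rfl fun k _ => by ring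
  have hpullA_sin : ∀ i j, (A * sinT A ω) i j
      = (1 / Real.pi) * ∫ t in Set.Ioi (0:ℝ), Real.sin (ω * t) * (A * E t) i j := by
    intro i j
    rw [Matrix.mul_apply]
    have h1 : ∀ k, A i k * sinT A ω k j
        = (1 / Real.pi) * ∫ t in Set.Ioi (0:ℝ), A i k * (Real.sin (ω * t) * E t k j) := by
      intro k
      rw [sinT, Matrix.of_apply, integral_const_mul]
      ring
    rw [Finset.sum_congr rfl fun k _ => h1 k, ← Finset.mul_sum,
      ← integral_finset_sum _ (fun k _ => ((hIE_sin k j).const_mul _))]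
    congr 1
    refine setIntegral_congr_fun measurableSet_Ioi fun t _ => ?_
    rw [Matrix.mul_apply, Finset.mul_sum]
    exact Finset.sum_congr rfl fun k _ => by ring
  refine ⟨?_, ?_, ?_, ?_⟩
  · -- Lyapunov
    ext i j
    have hAR : (A * gramian A B) i j = ∫ t in Set.Ioi (0:ℝ), (A * G t) i j := by
      rw [Matrix.mul_apply]
      have h1 : ∀ k, A i k * gramian A B k j
          = ∫ t in Set.Ioi (0:ℝ), A i k * G t k j := by
        intro k
        rw [gramian, Matrix.of_apply, integral_const_mul]
      rw [Finset.sum_congr rfl fun k _ => h1 k,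
        ← integral_finset_sum _ (fun k _ => ((hIG k j).const_mul _))]
      refine setIntegral_congr_fun measurableSet_Ioi fun t _ => ?_
      rw [Matrix.mul_apply]
    have hRA : (gramian A B * Aᵀ) i j = ∫ t in Set.Ioi (0:ℝ), (G t * Aᵀ) i j := by
      rw [Matrix.mul_apply]
      have h1 : ∀ k, gramian A B i k * Aᵀ k j
          = ∫ t in Set.Ioi (0:ℝ), G t i k * Aᵀ k j := by
        intro k
        rw [gramian, Matrix.of_apply, ← integral_mul_const]
      rw [Finset.sum_congr rfl fun k _ => h1 k,
        ← integral_finset_sum _ (fun k _ => ((hIG i k).mul_const _))]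
      refine setIntegral_congr_fun measurableSet_Ioi fun t _ => ?_
      rw [Matrix.mul_apply]
    rw [Matrix.add_apply, Matrix.neg_apply, hAR, hRA,
      ← integral_add (hIAG i j) (hIGA i j)]
    exact ftcG i j
  · -- A * S = -(1/π) • 1 + ω • sinT
    ext i j
    rw [hpullA_cos i j]
    have hint1 : IntegrableOn (fun t => -(Real.sin (ω * t)) * ω * E t i j) (Set.Ioi (0:ℝ)) := by
      have := (hIE_sin i j).const_mul (-ω)
      refine IntegrableOn.congr_fun this ?_ measurableSet_Ioi
      intro t _
      ring
    have hadd := integral_add hint1 (hIAE_cos i j)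
    have hu : (∫ t in Set.Ioi (0:ℝ), -(Real.sin (ω * t)) * ω * E t i j)
        = -ω * ∫ t in Set.Ioi (0:ℝ), Real.sin (ω * t) * E t i j := by
      rw [← integral_const_mul]
      refine setIntegral_congr_fun measurableSet_Ioi fun t _ => ?_
      ring
    have h2 : (∫ t in Set.Ioi (0:ℝ), Real.cos (ω * t) * (A * E t) i j)
        = -((1 : Matrix (Fin d) (Fin d) ℝ) i j)
          + ω * ∫ t in Set.Ioi (0:ℝ), Real.sin (ω * t) * E t i j := by
      have h3 := ftcC i j
      rw [hadd, hu] at h3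
      linarith
    rw [h2]
    simp only [Matrix.add_apply, Matrix.smul_apply, sinT, Matrix.of_apply, smul_eq_mul]
    ring
  · -- A * sinT = -ω • S
    ext i j
    rw [hpullA_sin i j]
    have hint1 : IntegrableOn (fun t => Real.cos (ω * t) * ω * E t i j) (Set.Ioi (0:ℝ)) := by
      have := (hIE_cos i j).const_mul ω
      refine IntegrableOn.congr_fun this ?_ measurableSet_Ioi
      intro t _
      ring
    have hadd := integral_add hint1 (hIAE_sin i j)
    have hu : (∫ t in Set.Ioi (0:ℝ), Real.cos (ω * t) * ω * E t i j)
        = ω * ∫ t in Set.Ioi (0:ℝ), Real.cos (ω * t) * E t i j := by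
      rw [← integral_const_mul]
      refine setIntegral_congr_fun measurableSet_Ioi fun t _ => ?_
      ring
    have h2 : (∫ t in Set.Ioi (0:ℝ), Real.sin (ω * t) * (A * E t) i j)
        = -(ω * ∫ t in Set.Ioi (0:ℝ), Real.cos (ω * t) * E t i j) := by
      have h3 := ftcS i j
      rw [hadd, hu] at h3
      linarith
    rw [h2]
    simp only [Matrix.smul_apply, cosTransform, Matrix.of_apply, smul_eq_mul]
    ring
  · -- S * A = A * S
    ext i j
    rw [hpullA_cos i j, Matrix.mul_apply]
    have h1 : ∀ k, cosTransform A ω i k * A k j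
        = (1 / Real.pi) * ∫ t in Set.Ioi (0:ℝ), (Real.cos (ω * t) * E t i k) * A k j := by
      intro k
      rw [cosTransform, Matrix.of_apply, mul_assoc, ← integral_mul_const]
    rw [Finset.sum_congr rfl fun k _ => h1 k, ← Finset.mul_sum,
      ← integral_finset_sum _ (fun k _ => ((hIE_cos i k).mul_const _))]
    congr 1
    refine setIntegral_congr_fun measurableSet_Ioi fun t _ => ?_
    have hEA : E t * A = A * E t := (exp_commute A t).symm
    rw [← hEA, Matrix.mul_apply, Finset.mul_sum]
    exact Finset.sum_congr rfl fun k _ => by ring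

lemma gram_symm {d m : ℕ} (A : Matrix (Fin d) (Fin d) ℝ) (B : Matrix (Fin d) (Fin m) ℝ) :
    (gramian A B)ᵀ = gramian A B := by
  have hsym : ∀ t : ℝ, (exp (t • A) * B * Bᵀ * exp (t • Aᵀ))ᵀ
      = exp (t • A) * B * Bᵀ * exp (t • Aᵀ) := by
    intro t
    rw [expT]
    simp [Matrix.transpose_mul, Matrix.transpose_transpose, Matrix.mul_assoc]
  ext i j
  rw [Matrix.transpose_apply, gramian, Matrix.of_apply, Matrix.of_apply]
  refine congrArg _ (funext fun t => ?_)
  conv_lhs => rw [← hsym t]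
  rfl

end L2aux

/-- With `a = Aᵀα` and `γ = Bᵀα`, the second-order Lyapunov exponent coefficient
`(π/ω²)(⟨a, Ŝ_A(ω)Ra⟩ + ⟨a, Ŝ_A(ω)Bγ⟩ + ‖γ‖²/(2π))` equals `π⟨α, Ŝ_A(ω)Rα⟩`. -/
theorem lambda2_eq_psd {d m : ℕ}
    (A : Matrix (Fin d) (Fin d) ℝ) (B : Matrix (Fin d) (Fin m) ℝ)
    (hA : ∀ μ ∈ spectrum ℂ (A.map Complex.ofReal), μ.re < 0)
    (α : Fin d → ℝ) (ω : ℝ) (hω : ω ≠ 0) :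
    (Real.pi / ω ^ 2) *
        (dotProduct (Aᵀ.mulVec α)
            ((cosTransform A ω).mulVec ((gramian A B).mulVec (Aᵀ.mulVec α)))
          + dotProduct (Aᵀ.mulVec α)
              ((cosTransform A ω).mulVec (B.mulVec (Bᵀ.mulVec α)))
          + (∑ ℓ : Fin m, (Bᵀ.mulVec α) ℓ ^ 2) / (2 * Real.pi))
      = Real.pi *
          dotProduct α ((cosTransform A ω).mulVec ((gramian A B).mulVec α)) := by
  classical
  obtain ⟨hLyap, hAS, hACs, hSA⟩ := L2aux.key_identities A B hA ω
  set S := cosTransform A ω with hS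
  set R := gramian A B with hR
  set Cs := L2aux.sinT A ω with hCs
  have hπ : Real.pi ≠ 0 := Real.pi_ne_zero
  -- matrix algebra
  have hAAS : A * (A * S) = (-(1 / Real.pi)) • A + (-(ω * ω)) • S := by
    calc A * (A * S) = A * ((-(1 / Real.pi)) • 1 + ω • Cs) := by rw [hAS]
      _ = (-(1 / Real.pi)) • (A * 1) + ω • (A * Cs) := by
          rw [Matrix.mul_add, Matrix.mul_smul, Matrix.mul_smul]
      _ = (-(1 / Real.pi)) • A + ω • ((-ω) • S) := by rw [Matrix.mul_one, hACs]
      _ = (-(1 / Real.pi)) • A + (-(ω * ω)) • S := by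
          rw [smul_smul]
          ring_nf
  have hRAB : R * Aᵀ + B * Bᵀ = -(A * R) := by
    refine eq_neg_of_add_eq_zero_right ?_
    rw [← add_assoc, hLyap, neg_add_cancel]
  have key1 : A * (S * R) * Aᵀ + A * (S * (B * Bᵀ))
      = (ω ^ 2) • (S * R) + (1 / Real.pi) • (A * R) := by
    have h1 : A * (S * R) * Aᵀ + A * (S * (B * Bᵀ)) = (A * S) * (R * Aᵀ + B * Bᵀ) := by
      rw [Matrix.mul_add]
      simp only [Matrix.mul_assoc]
    have h2 : (A * S) * (A * R) = (A * (A * S)) * R := by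
      rw [← Matrix.mul_assoc, Matrix.mul_assoc A S A, hSA, ← Matrix.mul_assoc]
    rw [h1, hRAB, Matrix.mul_neg, h2, hAAS, Matrix.add_mul, Matrix.smul_mul,
      Matrix.smul_mul]
    module
  -- dot product reductions
  have hstep : ∀ M : Matrix (Fin d) (Fin d) ℝ,
      dotProduct (Aᵀ.mulVec α) (M.mulVec (Aᵀ.mulVec α))
        = dotProduct α ((A * M * Aᵀ).mulVec α) := by
    intro M
    rw [Matrix.mulVec_mulVec, Matrix.mulVec_transpose, Matrix.dotProduct_mulVec,
      Matrix.vecMul_vecMul, ← Matrix.dotProduct_mulVec, ← Matrix.mul_assoc]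
  have hT1 : dotProduct (Aᵀ.mulVec α) (S.mulVec (R.mulVec (Aᵀ.mulVec α)))
      = dotProduct α ((A * (S * R) * Aᵀ).mulVec α) := by
    rw [Matrix.mulVec_mulVec, hstep (S * R)]
  have hT2 : dotProduct (Aᵀ.mulVec α) (S.mulVec (B.mulVec (Bᵀ.mulVec α)))
      = dotProduct α ((A * (S * (B * Bᵀ))).mulVec α) := by
    rw [Matrix.mulVec_mulVec, Matrix.mulVec_mulVec, Matrix.mulVec_transpose,
      Matrix.dotProduct_mulVec, Matrix.vecMul_vecMul, ← Matrix.dotProduct_mulVec]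
    congr 1
    simp only [Matrix.mul_assoc]
  have hT3 : (∑ ℓ : Fin m, (Bᵀ.mulVec α) ℓ ^ 2)
      = dotProduct α ((B * Bᵀ).mulVec α) := by
    have h1 : (∑ ℓ : Fin m, (Bᵀ.mulVec α) ℓ ^ 2)
        = dotProduct (Bᵀ.mulVec α) (Bᵀ.mulVec α) := by
      rw [dotProduct]
      exact Finset.sum_congr rfl fun ℓ _ => by ring
    rw [h1, Matrix.dotProduct_mulVec, Matrix.vecMul_transpose, Matrix.mulVec_mulVec,
      dotProduct_comm]
  have hsymdot : ∀ M : Matrix (Fin d) (Fin d) ℝ,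
      dotProduct α (Mᵀ.mulVec α) = dotProduct α (M.mulVec α) := by
    intro M
    rw [Matrix.mulVec_transpose, dotProduct_comm, ← Matrix.dotProduct_mulVec]
  set X : ℝ := dotProduct α ((S * R).mulVec α) with hX
  set Y : ℝ := dotProduct α ((A * R).mulVec α) with hY
  set Z : ℝ := dotProduct α ((B * Bᵀ).mulVec α) with hZ
  have hY2 : Y + Y = -Z := by
    have hRA' : dotProduct α ((R * Aᵀ).mulVec α) = Y := by
      have h1 : R * Aᵀ = (A * R)ᵀ := by
        rw [Matrix.transpose_mul, hR, L2aux.gram_symm]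
      rw [h1, hsymdot]
    have h2 : dotProduct α ((A * R + R * Aᵀ).mulVec α) = Y + dotProduct α ((R * Aᵀ).mulVec α) := by
      rw [Matrix.add_mulVec, dotProduct_add]
    rw [hLyap] at h2
    rw [← hRA']
    rw [Matrix.neg_mulVec, dotProduct_neg] at h2
    rw [hRA'] at h2 ⊢
    linarith [h2]
  have hsum12 : dotProduct α ((A * (S * R) * Aᵀ).mulVec α)
      + dotProduct α ((A * (S * (B * Bᵀ))).mulVec α)
      = ω ^ 2 * X + (1 / Real.pi) * Y := by
    rw [← dotProduct_add, ← Matrix.add_mulVec, key1, Matrix.add_mulVec,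
      dotProduct_add]
    congr 1 <;> rw [Matrix.smul_mulVec, dotProduct_smul, smul_eq_mul]
  have hRHS : dotProduct α (S.mulVec (R.mulVec α)) = X := by
    rw [Matrix.mulVec_mulVec]
  rw [hT1, hT2, hT3, hRHS]
  rw [hsum12]
  have hZval : Z = -(Y + Y) := by rw [hY2]; ring
  rw [hZval]
  have hω2 : ω ^ 2 ≠ 0 := pow_ne_zero 2 hω
  field_simp
  ring
end

section
/- Let χ > 0, ζ₁ > 0, ν ∈ ℝ and ω ∈ ℝ. Let A = [[0, 1], [−χ², −2ζ₁]] (a 2×2 matrix, which is Hurwitz), B = (0, ν)ᵀ ∈ ℝ^{2×1}, R = ∫₀^∞ e^{tA} B Bᵀ e^{tAᵀ} dt, and α = (0,1)ᵀ ∈ ℝ². Then π ⟨α, Ŝ_A(ω) R α⟩ = ω²ν² / (2[(χ² − ω²)² + 4ζ₁²ω²]). -/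
open MeasureTheory
open scoped Matrix

open Real Set Filter Topology NormedSpace

private lemma helper_q {x X : ℝ} (hX : 0 < X) (h : x*x ≤ 4*(X*X)) : |x| ≤ 2 * X := by
  have h1 : |x| * |x| ≤ (2*X)*(2*X) := by rw [abs_mul_abs_self]; nlinarith
  nlinarith [abs_nonneg x, hX]

private lemma helper_p {χ x X : ℝ} (hχ : 0 < χ) (hX : 0 < X) (h : χ^2*(x*x) ≤ 2*(X*X)) :
    |x| ≤ 2/χ * X := by
  have hxx : x*x ≤ (2/χ*X)*(2/χ*X) := by
    have h2 : x*x ≤ 2*(X*X)/χ^2 := by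
      rw [le_div_iff₀ (by positivity : (0:ℝ) < χ^2)]; nlinarith
    have h3 : 2*(X*X)/χ^2 ≤ (2/χ*X)*(2/χ*X) := by
      rw [div_le_iff₀ (by positivity : (0:ℝ) < χ^2)]
      have : (2/χ*X)*(2/χ*X)*χ^2 = 4*(X*X) := by field_simp; ring
      rw [this]; nlinarith [mul_pos hX hX]
    linarith
  have h1 : |x| * |x| ≤ (2/χ*X)*(2/χ*X) := by rw [abs_mul_abs_self]; exact hxx
  nlinarith [abs_nonneg x, hX, div_pos (by norm_num : (0:ℝ)<2) hχ, mul_pos (div_pos (by norm_num : (0:ℝ)<2) hχ) hX]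

section osc
variable {χ ζ ω : ℝ} {p q : ℝ → ℝ}

lemma osc_decay (hχ : 0 < χ) (hζ : 0 < ζ)
    (hp : ∀ t, HasDerivAt p (q t) t)
    (hq : ∀ t, HasDerivAt q (-χ^2 * p t - 2*ζ*q t) t)
    (hp0 : p 0 = 0) (hq0 : q 0 = 1) :
    ∃ r : ℝ, 0 < r ∧ (∀ t ≥ 0, |p t| ≤ (2/χ) * Real.exp (-r * t))
      ∧ (∀ t ≥ 0, |q t| ≤ 2 * Real.exp (-r * t)) := by
  have hpc : Continuous p := continuous_iff_continuousAt.2 fun x => (hp x).continuousAt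
  have hqc : Continuous q := continuous_iff_continuousAt.2 fun x => (hq x).continuousAt
  obtain ⟨ε, hε, hεζ, hεζχ⟩ : ∃ ε : ℝ, 0 < ε ∧ ε ≤ ζ ∧ ε * ζ ≤ χ^2 := by
    have hden : (0:ℝ) < χ^2 + ζ^2 := by positivity
    refine ⟨ζ*χ^2/(χ^2+ζ^2), by positivity, ?_, ?_⟩
    · rw [div_le_iff₀ hden]; nlinarith [sq_nonneg ζ, sq_nonneg χ]
    · rw [div_mul_eq_mul_div, div_le_iff₀ hden]; nlinarith [sq_nonneg (ζ*χ)]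
  have hεχ : ε ≤ χ := by nlinarith
  set V : ℝ → ℝ := fun t => χ^2 * (p t * p t) + q t * q t + ε * (p t * q t) with hV
  set W : ℝ → ℝ := fun t => V t * Real.exp ((ε/2) * t) with hW
  have hVd : ∀ t, HasDerivAt V
      (χ^2 * (q t * p t + p t * q t) + (((-χ^2 * p t - 2*ζ*q t) * q t)
        + q t * (-χ^2 * p t - 2*ζ*q t)) + ε * (q t * q t + p t * (-χ^2 * p t - 2*ζ*q t))) t := by
    intro t
    exact ((((hp t).mul (hp t)).const_mul (χ^2)).add ((hq t).mul (hq t))).add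
      (((hp t).mul (hq t)).const_mul ε)
  have hlin : ∀ t : ℝ, HasDerivAt (fun u : ℝ => Real.exp ((ε/2) * u))
      (Real.exp ((ε/2) * t) * (ε/2)) t := by
    intro t
    have h0 : HasDerivAt (fun u : ℝ => (ε/2) * u) (ε/2) t := by
      simpa using (hasDerivAt_id t).const_mul (ε/2)
    exact h0.exp
  have hWd : ∀ t, HasDerivAt W
      ((χ^2 * (q t * p t + p t * q t) + (((-χ^2 * p t - 2*ζ*q t) * q t)
        + q t * (-χ^2 * p t - 2*ζ*q t)) + ε * (q t * q t + p t * (-χ^2 * p t - 2*ζ*q t)))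
          * Real.exp ((ε/2) * t) + V t * (Real.exp ((ε/2)*t) * (ε/2))) t :=
    fun t => (hVd t).mul (hlin t)
  have hW' : ∀ t, deriv W t ≤ 0 := by
    intro t
    rw [(hWd t).deriv]
    have hE : 0 < Real.exp ((ε/2)*t) := Real.exp_pos _
    have hA0 : (0:ℝ) < 4*ζ - 3*ε/2 := by linarith
    have e1 : (2*ζ-ε/2)^2 ≤ 4*ζ^2 := by nlinarith
    have e2 : ε^2*(2*ζ-ε/2)^2 ≤ 4*ε^2*ζ^2 := by nlinarith [sq_nonneg ε]
    have e3 : 4*(ε^2*ζ^2) ≤ 4*((ε*ζ)*χ^2) := by nlinarith [mul_pos hε hζ]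
    have e4 : 4*((ε*ζ)*χ^2) ≤ 2*ε*χ^2*(4*ζ-3*ε/2) := by
      nlinarith [mul_nonneg (mul_nonneg hε.le (sq_nonneg χ)) (sub_nonneg.2 hεζ)]
    have hdisc : (ε*(2*ζ-ε/2))^2 ≤ 4*(4*ζ-3*ε/2)*(ε*χ^2/2) := by nlinarith
    set a := p t with ha
    set b := q t with hb
    have key0 : 0 ≤ (4*ζ-3*ε/2)*b^2 + (ε*χ^2/2)*a^2 + (ε*(2*ζ-ε/2))*(a*b) := by
      have hid : 4*(4*ζ-3*ε/2)*((4*ζ-3*ε/2)*b^2 + (ε*χ^2/2)*a^2 + (ε*(2*ζ-ε/2))*(a*b))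
          = (2*(4*ζ-3*ε/2)*b + (ε*(2*ζ-ε/2))*a)^2
            + (4*(4*ζ-3*ε/2)*(ε*χ^2/2) - (ε*(2*ζ-ε/2))^2)*a^2 := by ring
      have h5 : 0 ≤ 4*(4*ζ-3*ε/2)*((4*ζ-3*ε/2)*b^2 + (ε*χ^2/2)*a^2 + (ε*(2*ζ-ε/2))*(a*b)) := by
        rw [hid]
        exact add_nonneg (sq_nonneg _) (mul_nonneg (sub_nonneg.2 hdisc) (sq_nonneg a))
      have h4A0 : (0:ℝ) < 4*(4*ζ-3*ε/2) := by linarith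
      exact (mul_nonneg_iff_of_pos_left h4A0).mp h5
    have key : (χ^2 * (b * a + a * b) + (((-χ^2 * a - 2*ζ*b) * b)
        + b * (-χ^2 * a - 2*ζ*b)) + ε * (b * b + a * (-χ^2 * a - 2*ζ*b)))
        + (χ^2 * (a * a) + b * b + ε * (a * b)) * (ε/2) ≤ 0 := by
      have hid2 : (χ^2 * (b * a + a * b) + (((-χ^2 * a - 2*ζ*b) * b)
          + b * (-χ^2 * a - 2*ζ*b)) + ε * (b * b + a * (-χ^2 * a - 2*ζ*b)))
          + (χ^2 * (a * a) + b * b + ε * (a * b)) * (ε/2)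
          = -((4*ζ-3*ε/2)*b^2 + (ε*χ^2/2)*a^2 + (ε*(2*ζ-ε/2))*(a*b)) := by ring
      rw [hid2]; linarith [key0]
    have hVt : V t = χ^2 * (a * a) + b * b + ε * (a * b) := rfl
    rw [hVt]
    calc (χ^2 * (b * a + a * b) + (((-χ^2 * a - 2*ζ*b) * b)
        + b * (-χ^2 * a - 2*ζ*b)) + ε * (b * b + a * (-χ^2 * a - 2*ζ*b)))
          * Real.exp ((ε/2) * t) + (χ^2 * (a * a) + b * b + ε * (a * b)) * (Real.exp ((ε/2)*t) * (ε/2))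
        = ((χ^2 * (b * a + a * b) + (((-χ^2 * a - 2*ζ*b) * b)
            + b * (-χ^2 * a - 2*ζ*b)) + ε * (b * b + a * (-χ^2 * a - 2*ζ*b)))
          + (χ^2 * (a * a) + b * b + ε * (a * b)) * (ε/2)) * Real.exp ((ε/2)*t) := by ring
      _ ≤ 0 := mul_nonpos_iff.2 (Or.inr ⟨key, hE.le⟩)
  have hWanti : AntitoneOn W (Ici (0:ℝ)) := by
    apply antitoneOn_of_deriv_nonpos (convex_Ici 0)
    · exact Continuous.continuousOn (by fun_prop)
    · exact fun x _ => (hWd x).differentiableAt.differentiableWithinAt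
    · exact fun x _ => hW' x
  have hW0 : W 0 = 1 := by simp [hW, hV, hp0, hq0]
  have hVle : ∀ t ≥ 0, V t ≤ Real.exp (-(ε/2) * t) := by
    intro t ht
    have h1 : W t ≤ 1 := hW0 ▸ hWanti self_mem_Ici ht ht
    have hmul : Real.exp ((ε/2)*t) * Real.exp (-(ε/2)*t) = 1 := by
      rw [← Real.exp_add]; ring_nf; exact Real.exp_zero
    have hE : 0 < Real.exp ((ε/2)*t) := Real.exp_pos _
    rw [hW] at h1
    nlinarith [Real.exp_pos (-(ε/2)*t)]
  have hVlow : ∀ t, χ^2 * (p t * p t) + q t * q t ≤ 2 * V t := by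
    intro t
    simp only [hV]
    nlinarith [sq_nonneg (χ * p t + q t), sq_nonneg (χ * p t - q t),
      sq_nonneg (p t * q t), mul_nonneg (sub_nonneg.2 hεχ) (sq_nonneg (p t + q t)),
      mul_nonneg (sub_nonneg.2 hεχ) (sq_nonneg (p t - q t)), hε.le, hεχ]
  clear_value V W
  refine ⟨ε/4, by positivity, ?_, ?_⟩
  · intro t ht
    have h1 := hVle t ht
    have h2 := hVlow t
    have hsq : Real.exp (-(ε/2)*t) = Real.exp (-(ε/4)*t) * Real.exp (-(ε/4)*t) := by
      rw [← Real.exp_add]; ring_nf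
    have hE : 0 < Real.exp (-(ε/4)*t) := Real.exp_pos _
    have h3 : χ^2*(p t * p t) ≤ 2*(Real.exp (-(ε/4)*t) * Real.exp (-(ε/4)*t)) := by
      rw [← hsq]; linarith [mul_self_nonneg (q t)]
    exact helper_p hχ hE h3
  · intro t ht
    have h1 := hVle t ht
    have h2 := hVlow t
    have hsq : Real.exp (-(ε/2)*t) = Real.exp (-(ε/4)*t) * Real.exp (-(ε/4)*t) := by
      rw [← Real.exp_add]; ring_nf
    have hE : 0 < Real.exp (-(ε/4)*t) := Real.exp_pos _
    have h3 : q t * q t ≤ 4*(Real.exp (-(ε/4)*t) * Real.exp (-(ε/4)*t)) := by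
      rw [← hsq]
      have hpp : 0 ≤ χ^2*(p t * p t) := mul_nonneg (sq_nonneg χ) (mul_self_nonneg (p t))
      linarith [Real.exp_pos (-(ε/2)*t)]
    exact helper_q hE h3

private lemma int_of_bound {f : ℝ → ℝ} {K r : ℝ} (hr : 0 < r) (hc : Continuous f)
    (hb : ∀ t ≥ 0, |f t| ≤ K * Real.exp (-r * t)) : IntegrableOn f (Ioi (0:ℝ)) := by
  apply Integrable.mono' ((exp_neg_integrableOn_Ioi 0 hr).const_mul K)
  · exact hc.aestronglyMeasurable.restrict
  · filter_upwards [ae_restrict_mem measurableSet_Ioi] with t ht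
    simpa [Real.norm_eq_abs] using hb t (le_of_lt ht)

private lemma tendsto_of_bound {f : ℝ → ℝ} {K r : ℝ} (hr : 0 < r)
    (hb : ∀ t ≥ 0, |f t| ≤ K * Real.exp (-r * t)) : Tendsto f atTop (𝓝 0) := by
  apply squeeze_zero_norm' ((eventually_ge_atTop (0:ℝ)).mono fun t ht => by
    simpa [Real.norm_eq_abs] using hb t ht)
  have h1 : Tendsto (fun t : ℝ => -r * t) atTop atBot :=
    tendsto_id.const_mul_atTop_of_neg (by linarith)
  have h2 : Tendsto (fun t : ℝ => Real.exp (-r * t)) atTop (𝓝 0) :=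
    Real.tendsto_exp_atBot.comp h1
  simpa using h2.const_mul K

private lemma exp_bound_prod {f g : ℝ → ℝ} {Kf Kg r : ℝ} (hKf : 0 ≤ Kf) (hKg : 0 ≤ Kg)
    (hf : ∀ t ≥ 0, |f t| ≤ Kf * Real.exp (-r*t)) (hg : ∀ t ≥ 0, |g t| ≤ Kg * Real.exp (-r*t)) :
    ∀ t ≥ 0, |f t * g t| ≤ (Kf*Kg) * Real.exp (-(2*r)*t) := by
  intro t ht
  have he : Real.exp (-r*t) * Real.exp (-r*t) = Real.exp (-(2*r)*t) := by
    rw [← Real.exp_add]; ring_nf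
  rw [abs_mul]
  calc |f t| * |g t| ≤ (Kf * Real.exp (-r*t)) * (Kg * Real.exp (-r*t)) :=
        mul_le_mul (hf t ht) (hg t ht) (abs_nonneg _) (by positivity)
    _ = (Kf*Kg) * (Real.exp (-r*t) * Real.exp (-r*t)) := by ring
    _ = (Kf*Kg) * Real.exp (-(2*r)*t) := by rw [he]

private lemma exp_bound_trig {g : ℝ → ℝ} {Kg r : ℝ} (c : ℝ → ℝ) (hc : ∀ t, |c t| ≤ 1)
    (hg : ∀ t ≥ 0, |g t| ≤ Kg * Real.exp (-r*t)) :
    ∀ t ≥ 0, |c t * g t| ≤ Kg * Real.exp (-r*t) := by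
  intro t ht
  rw [abs_mul]
  calc |c t| * |g t| ≤ 1 * |g t| := mul_le_mul_of_nonneg_right (hc t) (abs_nonneg _)
    _ = |g t| := one_mul _
    _ ≤ Kg * Real.exp (-r*t) := hg t ht

lemma osc_integrals (hχ : 0 < χ) (hζ : 0 < ζ) (ω : ℝ)
    (hp : ∀ t, HasDerivAt p (q t) t)
    (hq : ∀ t, HasDerivAt q (-χ^2 * p t - 2*ζ*q t) t)
    (hp0 : p 0 = 0) (hq0 : q 0 = 1) :
    (∫ t in Ioi (0:ℝ), p t * q t) = 0 ∧
    (∫ t in Ioi (0:ℝ), q t * q t) = 1/(4*ζ) ∧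
    (∫ t in Ioi (0:ℝ), Real.cos (ω*t) * q t)
      = 2*ζ*ω^2 / ((χ^2-ω^2)^2 + 4*ζ^2*ω^2) := by
  have hpc : Continuous p := continuous_iff_continuousAt.2 fun x => (hp x).continuousAt
  have hqc : Continuous q := continuous_iff_continuousAt.2 fun x => (hq x).continuousAt
  obtain ⟨r, hr, hbp, hbq⟩ := osc_decay hχ hζ hp hq hp0 hq0
  have hKp : (0:ℝ) ≤ 2/χ := by positivity
  have hcos : ∀ t, |Real.cos (ω*t)| ≤ 1 := fun t => Real.abs_cos_le_one _
  have hsin : ∀ t, |Real.sin (ω*t)| ≤ 1 := fun t => Real.abs_sin_le_one _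
  -- continuity facts
  have hccos : Continuous fun t => Real.cos (ω*t) := by fun_prop
  have hcsin : Continuous fun t => Real.sin (ω*t) := by fun_prop
  -- integrability facts
  have Ipq : IntegrableOn (fun t => p t * q t) (Ioi (0:ℝ)) :=
    int_of_bound (by linarith) (hpc.mul hqc)
      (exp_bound_prod hKp (by norm_num) hbp hbq)
  have Iqq : IntegrableOn (fun t => q t * q t) (Ioi (0:ℝ)) :=
    int_of_bound (by linarith) (hqc.mul hqc)
      (exp_bound_prod (by norm_num) (by norm_num) hbq hbq)
  have Icq : IntegrableOn (fun t => Real.cos (ω*t) * q t) (Ioi (0:ℝ)) :=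
    int_of_bound hr (hccos.mul hqc) (exp_bound_trig _ hcos hbq)
  have Isq : IntegrableOn (fun t => Real.sin (ω*t) * q t) (Ioi (0:ℝ)) :=
    int_of_bound hr (hcsin.mul hqc) (exp_bound_trig _ hsin hbq)
  have Icp : IntegrableOn (fun t => Real.cos (ω*t) * p t) (Ioi (0:ℝ)) :=
    int_of_bound hr (hccos.mul hpc) (exp_bound_trig _ hcos hbp)
  have Isp : IntegrableOn (fun t => Real.sin (ω*t) * p t) (Ioi (0:ℝ)) :=
    int_of_bound hr (hcsin.mul hpc) (exp_bound_trig _ hsin hbp)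
  -- limits
  have Lp : Tendsto p atTop (𝓝 0) := tendsto_of_bound hr hbp
  have Lq : Tendsto q atTop (𝓝 0) := tendsto_of_bound hr hbq
  have Lcp : Tendsto (fun t => Real.cos (ω*t) * p t) atTop (𝓝 0) :=
    tendsto_of_bound hr (exp_bound_trig _ hcos hbp)
  have Lsp : Tendsto (fun t => Real.sin (ω*t) * p t) atTop (𝓝 0) :=
    tendsto_of_bound hr (exp_bound_trig _ hsin hbp)
  have Lcq : Tendsto (fun t => Real.cos (ω*t) * q t) atTop (𝓝 0) :=
    tendsto_of_bound hr (exp_bound_trig _ hcos hbq)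
  have Lsq : Tendsto (fun t => Real.sin (ω*t) * q t) atTop (𝓝 0) :=
    tendsto_of_bound hr (exp_bound_trig _ hsin hbq)
  -- trig derivatives
  have hc' : ∀ t : ℝ, HasDerivAt (fun u => Real.cos (ω*u)) (-Real.sin (ω*t)*ω) t := by
    intro t
    have h0 : HasDerivAt (fun u : ℝ => ω * u) ω t := by simpa using (hasDerivAt_id t).const_mul ω
    exact (Real.hasDerivAt_cos (ω*t)).comp t h0
  have hs' : ∀ t : ℝ, HasDerivAt (fun u => Real.sin (ω*u)) (Real.cos (ω*t)*ω) t := by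
    intro t
    have h0 : HasDerivAt (fun u : ℝ => ω * u) ω t := by simpa using (hasDerivAt_id t).const_mul ω
    exact (Real.hasDerivAt_sin (ω*t)).comp t h0
  -- equation 1
  have E1 : (∫ t in Ioi (0:ℝ), p t * q t) = 0 := by
    have hd : ∀ x ∈ Ici (0:ℝ), HasDerivAt (fun t => p t * p t / 2) (p x * q x) x := by
      intro x _
      have := ((hp x).mul (hp x)).div_const 2
      exact this.congr_deriv (by ring)
    have := integral_Ioi_of_hasDerivAt_of_tendsto' hd Ipq (by simpa using (Lp.mul Lp).div_const 2)
    rw [this, hp0]; ring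
  -- equation 2
  have E2 : (∫ t in Ioi (0:ℝ), q t * q t) = 1/(4*ζ) := by
    have hd : ∀ x ∈ Ici (0:ℝ), HasDerivAt (fun t => (q t * q t + χ^2 * (p t * p t)) / 2)
        (-(2*ζ) * (q x * q x)) x := by
      intro x _
      have := (((hq x).mul (hq x)).add (((hp x).mul (hp x)).const_mul (χ^2))).div_const 2
      exact this.congr_deriv (by ring)
    have hlim : Tendsto (fun t => (q t * q t + χ^2 * (p t * p t)) / 2) atTop (𝓝 0) := by
      have := ((Lq.mul Lq).add ((Lp.mul Lp).const_mul (χ^2))).div_const 2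
      simpa using this
    have h := integral_Ioi_of_hasDerivAt_of_tendsto' hd (Iqq.const_mul _) hlim
    rw [integral_const_mul _ _] at h
    rw [hp0, hq0] at h
    have hζ' : (4:ℝ)*ζ ≠ 0 := by positivity
    field_simp at h ⊢
    linarith
  refine ⟨E1, E2, ?_⟩
  -- the four trig equations
  set C := ∫ t in Ioi (0:ℝ), Real.cos (ω*t) * q t with hC
  set S := ∫ t in Ioi (0:ℝ), Real.sin (ω*t) * q t with hS
  set P := ∫ t in Ioi (0:ℝ), Real.cos (ω*t) * p t with hP
  set Q := ∫ t in Ioi (0:ℝ), Real.sin (ω*t) * p t with hQ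
  have E3 : -ω * Q + C = 0 := by
    have hd : ∀ x ∈ Ici (0:ℝ), HasDerivAt (fun t => Real.cos (ω*t) * p t)
        (-ω * (Real.sin (ω*x) * p x) + Real.cos (ω*x) * q x) x := by
      intro x _
      have := (hc' x).mul (hp x)
      exact this.congr_deriv (by ring)
    have h := integral_Ioi_of_hasDerivAt_of_tendsto' hd
      ((Isp.const_mul (-ω)).add Icq) Lcp
    rw [integral_add (Isp.const_mul (-ω)) Icq, integral_const_mul _ _] at h
    rw [hp0] at h; simpa using h
  have E4 : ω * P + S = 0 := by
    have hd : ∀ x ∈ Ici (0:ℝ), HasDerivAt (fun t => Real.sin (ω*t) * p t)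
        (ω * (Real.cos (ω*x) * p x) + Real.sin (ω*x) * q x) x := by
      intro x _
      have := (hs' x).mul (hp x)
      exact this.congr_deriv (by ring)
    have h := integral_Ioi_of_hasDerivAt_of_tendsto' hd
      ((Icp.const_mul ω).add Isq) Lsp
    rw [integral_add (Icp.const_mul ω) Isq, integral_const_mul _ _] at h
    rw [hp0] at h; simpa using h
  have E5 : -ω * S + (-(χ^2) * P + -(2*ζ) * C) = -1 := by
    have hd : ∀ x ∈ Ici (0:ℝ), HasDerivAt (fun t => Real.cos (ω*t) * q t)
        (-ω * (Real.sin (ω*x) * q x)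
          + (-(χ^2) * (Real.cos (ω*x) * p x) + -(2*ζ) * (Real.cos (ω*x) * q x))) x := by
      intro x _
      have := (hc' x).mul (hq x)
      exact this.congr_deriv (by ring)
    have I1 : IntegrableOn (fun x => -(χ^2) * (Real.cos (ω*x) * p x)
        + -(2*ζ) * (Real.cos (ω*x) * q x)) (Ioi (0:ℝ)) :=
      (Icp.const_mul (-(χ^2))).add (Icq.const_mul (-(2*ζ)))
    have h := integral_Ioi_of_hasDerivAt_of_tendsto' hd
      ((Isq.const_mul (-ω)).add I1) Lcq
    rw [integral_add (Isq.const_mul (-ω)) I1,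
      integral_add (Icp.const_mul (-(χ^2))) (Icq.const_mul (-(2*ζ))),
      integral_const_mul _ _, integral_const_mul _ _, integral_const_mul _ _] at h
    rw [hq0] at h; simpa using h
  have E6 : ω * C + (-(χ^2) * Q + -(2*ζ) * S) = 0 := by
    have hd : ∀ x ∈ Ici (0:ℝ), HasDerivAt (fun t => Real.sin (ω*t) * q t)
        (ω * (Real.cos (ω*x) * q x)
          + (-(χ^2) * (Real.sin (ω*x) * p x) + -(2*ζ) * (Real.sin (ω*x) * q x))) x := by
      intro x _
      have := (hs' x).mul (hq x)
      exact this.congr_deriv (by ring)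
    have I1 : IntegrableOn (fun x => -(χ^2) * (Real.sin (ω*x) * p x)
        + -(2*ζ) * (Real.sin (ω*x) * q x)) (Ioi (0:ℝ)) :=
      (Isp.const_mul (-(χ^2))).add (Isq.const_mul (-(2*ζ)))
    have h := integral_Ioi_of_hasDerivAt_of_tendsto' hd
      ((Icq.const_mul ω).add I1) Lsq
    rw [integral_add (Icq.const_mul ω) I1,
      integral_add (Isp.const_mul (-(χ^2))) (Isq.const_mul (-(2*ζ))),
      integral_const_mul _ _, integral_const_mul _ _, integral_const_mul _ _] at h
    rw [hq0] at h; simpa using h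
  have hD : 0 < (χ^2-ω^2)^2 + 4*ζ^2*ω^2 := by
    rcases eq_or_ne ω 0 with h|h
    · simp [h]; positivity
    · positivity
  rw [eq_div_iff hD.ne']
  linear_combination ((χ^2-ω^2)*χ^2)*E3 - ((χ^2-ω^2)*ω)*E6
    - ((χ^2-ω^2)*2*ζ*ω + 2*ζ*ω^3)*E4 - 2*ζ*ω^2*E5

end osc

noncomputable def entryLM (i j : Fin 2) : Matrix (Fin 2) (Fin 2) ℝ →ₗ[ℝ] ℝ where
  toFun M := M i j
  map_add' _ _ := rfl
  map_smul' _ _ := rfl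

lemma entry_hasDerivAt (A : Matrix (Fin 2) (Fin 2) ℝ) (i j : Fin 2) (t : ℝ) :
    HasDerivAt (fun u : ℝ => (NormedSpace.exp (u • A)) i j) ((A * NormedSpace.exp (t • A)) i j) t := by
  letI : SeminormedRing (Matrix (Fin 2) (Fin 2) ℝ) := Matrix.linftyOpSemiNormedRing
  letI : NormedRing (Matrix (Fin 2) (Fin 2) ℝ) := Matrix.linftyOpNormedRing
  letI : NormedAlgebra ℝ (Matrix (Fin 2) (Fin 2) ℝ) := Matrix.linftyOpNormedAlgebra
  have h := hasDerivAt_exp_smul_const' (𝕂 := ℝ) A t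
  have hL := (LinearMap.toContinuousLinearMap (entryLM i j)).hasFDerivAt
    (x := NormedSpace.exp (t • A))
  exact (hL.comp_hasDerivAt t h : )


/-- For the damped linear oscillator `η̈ + 2ζ₁η̇ + χ²η = νẆ`, with companion matrix
`A = [[0,1],[−χ²,−2ζ₁]]`, `B = (0,ν)ᵀ` and `α = (0,1)ᵀ`, one has
`π⟨α, Ŝ_A(ω)Rα⟩ = ω²ν²/(2[(χ² − ω²)² + 4ζ₁²ω²])`. -/
theorem psd_block_pendulum (χ ζ₁ ν ω : ℝ) (hχ : 0 < χ) (hζ₁ : 0 < ζ₁) :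
    Real.pi *
        dotProduct (![0, 1])
          ((cosTransform (!![0, 1; -χ ^ 2, -(2 * ζ₁)]) ω).mulVec
            ((gramian (!![0, 1; -χ ^ 2, -(2 * ζ₁)]) (!![(0 : ℝ); ν])).mulVec ![0, 1]))
      = ω ^ 2 * ν ^ 2 / (2 * ((χ ^ 2 - ω ^ 2) ^ 2 + 4 * ζ₁ ^ 2 * ω ^ 2)) := by
  set A : Matrix (Fin 2) (Fin 2) ℝ := !![0, 1; -χ ^ 2, -(2 * ζ₁)] with hA
  have hp : ∀ t : ℝ, HasDerivAt (fun u : ℝ => (NormedSpace.exp (u • A)) 0 1)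
      ((NormedSpace.exp (t • A)) 1 1) t := by
    intro t
    have h := entry_hasDerivAt A 0 1 t
    have : (A * NormedSpace.exp (t • A)) 0 1 = (NormedSpace.exp (t • A)) 1 1 := by
      rw [hA]; simp [Matrix.mul_apply, Fin.sum_univ_two]
    rwa [this] at h
  have hq : ∀ t : ℝ, HasDerivAt (fun u : ℝ => (NormedSpace.exp (u • A)) 1 1)
      (-χ^2 * (NormedSpace.exp (t • A)) 0 1 - 2*ζ₁*(NormedSpace.exp (t • A)) 1 1) t := by
    intro t
    have h := entry_hasDerivAt A 1 1 t
    have : (A * NormedSpace.exp (t • A)) 1 1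
        = -χ^2 * (NormedSpace.exp (t • A)) 0 1 - 2*ζ₁*(NormedSpace.exp (t • A)) 1 1 := by
      rw [hA]; simp [Matrix.mul_apply, Fin.sum_univ_two]; ring
    rwa [this] at h
  have hp0 : (NormedSpace.exp ((0:ℝ) • A)) 0 1 = 0 := by
    rw [zero_smul, NormedSpace.exp_zero]; simp [Matrix.one_apply]
  have hq0 : (NormedSpace.exp ((0:ℝ) • A)) 1 1 = 1 := by
    rw [zero_smul, NormedSpace.exp_zero]; simp [Matrix.one_apply]
  have hT : ∀ t : ℝ, NormedSpace.exp (t • Aᵀ) = (NormedSpace.exp (t • A))ᵀ := by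
    intro t
    rw [← Matrix.transpose_smul, Matrix.exp_transpose]
  have hent : ∀ (t : ℝ) (i : Fin 2),
      (NormedSpace.exp (t • A) * !![(0:ℝ); ν] * !![(0:ℝ); ν]ᵀ * NormedSpace.exp (t • Aᵀ)) i 1
        = ν^2 * ((NormedSpace.exp (t • A)) i 1 * (NormedSpace.exp (t • A)) 1 1) := by
    intro t i
    rw [hT t]
    simp [Matrix.mul_apply, Fin.sum_univ_two, Fin.sum_univ_one, Matrix.vecHead, Matrix.vecTail,
      Matrix.transpose_apply]
    ring
  obtain ⟨I1, I2, I3⟩ := osc_integrals hχ hζ₁ ω hp hq hp0 hq0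
  have hG01 : gramian A !![(0:ℝ); ν] 0 1
      = ν^2 * ∫ t in Ioi (0:ℝ), (NormedSpace.exp (t • A)) 0 1 * (NormedSpace.exp (t • A)) 1 1 := by
    rw [gramian, ← integral_const_mul]
    simp only [Matrix.of_apply]
    exact integral_congr_ae (Eventually.of_forall fun t => hent t 0)
  have hG11 : gramian A !![(0:ℝ); ν] 1 1
      = ν^2 * ∫ t in Ioi (0:ℝ), (NormedSpace.exp (t • A)) 1 1 * (NormedSpace.exp (t • A)) 1 1 := by
    rw [gramian, ← integral_const_mul]
    simp only [Matrix.of_apply]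
    exact integral_congr_ae (Eventually.of_forall fun t => hent t 1)
  have hπ : Real.pi ≠ 0 := Real.pi_ne_zero
  have hD : (0:ℝ) < (χ^2-ω^2)^2 + 4*ζ₁^2*ω^2 := by
    rcases eq_or_ne ω 0 with h|h
    · simp [h]; positivity
    · positivity
  simp only [dotProduct, Matrix.mulVec, Fin.sum_univ_two, Matrix.cons_val_zero,
    Matrix.cons_val_one, Matrix.head_cons, cosTransform, Matrix.of_apply]
  rw [hG01, hG11, I1, I2, I3]
  field_simp
  ring
end
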